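/- arXiv:1906.03991 — 2 statements merged into one kernel-verified Lean document; each statement's English description precedes it below -/
import Mathlib

section
/- Let k ≤ m ≤ n, let S, T be subsets of {1,...,m} each of cardinality at most k with S ≤ T (meaning |S| ≥ |T| and S^i ≤ T^i for i ≤ |T|), and let Ŝ, T̂ denote their (k,m)-completions. Then Ŝ ≤ T̂, i.e., Ŝ^i ≤ T̂^i for all i ∈ {1,...,k}. -/
/-- The `i`-th smallest element (0-indexed) of a finite set of naturals
(`0` if `i` is out of range). -/
def nthEl (S : Finset ℕ) (i : ℕ) : ℕ := (S.sort (· ≤ ·)).getD i 0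

/-- The order on subsets of equal cardinality: `S ≤ T` iff `|S| = |T|` and the `i`-th
smallest element of `S` is at most that of `T`, for all `i`. -/
def FLE (S T : Finset ℕ) : Prop :=
  S.card = T.card ∧ ∀ i < T.card, nthEl S i ≤ nthEl T i

/-- The general order: `S ≤ T` iff `|S| ≥ |T|` and the `i`-th smallest element of `S`
is at most that of `T` for all `i < |T|`. -/
def GLE (S T : Finset ℕ) : Prop :=
  T.card ≤ S.card ∧ ∀ i < T.card, nthEl S i ≤ nthEl T i

/-- A word `w` over `{1,…,n}` is readable from `P` to `Q` if there is a chain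
`P ≤ S₁ ≤ … ≤ S_{|w|} ≤ Q` of subsets of `{1,…,n}` with `wᵢ ∈ Sᵢ` for each `i`. -/
def Readable (n : ℕ) (w : List ℕ) (P Q : Finset ℕ) : Prop :=
  ∃ L : List (Finset ℕ), L.length = w.length ∧ (∀ A ∈ L, A ⊆ Finset.Icc 1 n) ∧
    List.Chain' FLE (P :: (L ++ [Q])) ∧
    ∀ i (h : i < w.length), w.get ⟨i, h⟩ ∈ L.getD i ∅

/-- Tropical (max-plus) product of matrices indexed by subsets of `{1,…,n}`. -/
noncomputable def tmul (n : ℕ) (A B : Finset ℕ → Finset ℕ → WithBot ℝ) :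
    Finset ℕ → Finset ℕ → WithBot ℝ :=
  fun P Q => ((Finset.Icc 1 n).powerset).sup fun R => A P R + B R Q

open Classical in
/-- The image of a generator `x ∈ {1,…,n}` under `ρₙ`. -/
noncomputable def rhoGen (n : ℕ) (x : ℕ) (P Q : Finset ℕ) : WithBot ℝ :=
  if FLE P Q then
    (if ∃ S : Finset ℕ, S ⊆ Finset.Icc 1 n ∧ FLE P S ∧ FLE S Q ∧ x ∈ S then 1 else 0)
  else ⊥

open Classical in
/-- The image of a word under `ρₙ`, extended multiplicatively (the empty word maps to the
matrix with `0` in positions `(P,Q)` with `P ≤ Q` and `-∞` elsewhere). -/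
noncomputable def rhoW (n : ℕ) : List ℕ → Finset ℕ → Finset ℕ → WithBot ℝ
  | [] => fun P Q => if FLE P Q then 0 else ⊥
  | x :: w => tmul n (rhoGen n x) (rhoW n w)

/-- The Knuth relations over `{1,…,n}`. -/
inductive KnuthRel (n : ℕ) : List ℕ → List ℕ → Prop
  | k1 (a b c : ℕ) (h1 : 1 ≤ a) (h2 : a < b) (h3 : b ≤ c) (h4 : c ≤ n) :
      KnuthRel n [b, c, a] [b, a, c]
  | k2 (a b c : ℕ) (h1 : 1 ≤ a) (h2 : a ≤ b) (h3 : b < c) (h4 : c ≤ n) :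
      KnuthRel n [c, a, b] [a, c, b]

/-- The plactic congruence on words: the equivalence generated by applying Knuth
relations inside words. Two words are related iff they represent the same element of
the plactic monoid of rank `n`. -/
def PlacticRel (n : ℕ) : List ℕ → List ℕ → Prop :=
  Relation.EqvGen fun w v => ∃ p s x y, KnuthRel n x y ∧ w = p ++ x ++ s ∧ v = p ++ y ++ s

/-- A semistandard Young tableau over `{1,…,n}`, given by its list of rows
(row 0 is the bottom row): entries lie in `{1,…,n}`, rows weakly increase left to right,
row lengths weakly decrease going up, columns strictly increase going up
(i.e. strictly decrease reading down). -/
structure Tableau (n : ℕ) where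
  rows : List (List ℕ)
  entries_mem : ∀ r ∈ rows, ∀ x ∈ r, x ∈ Finset.Icc 1 n
  row_weak : ∀ r ∈ rows, List.Pairwise (· ≤ ·) r
  shape : ∀ i, (rows.getD (i + 1) []).length ≤ (rows.getD i []).length
  col_strict : ∀ i j, j < (rows.getD (i + 1) []).length →
    (rows.getD i []).getD j 0 < (rows.getD (i + 1) []).getD j 0

/-- The number of occurrences of the symbol `y` in row `x` (rows numbered from 1, from
the bottom) of the tableau `T`. -/
def rowCount {n : ℕ} (T : Tableau n) (x y : ℕ) : ℕ := (T.rows.getD (x - 1) []).count y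

/-- The row reading of a tableau: rows read left to right, from top row to bottom row. -/
def rowReading {n : ℕ} (T : Tableau n) : List ℕ := T.rows.reverse.flatten

/-- The `j`-th column of a tableau, read from top to bottom. -/
def colOf {n : ℕ} (T : Tableau n) (j : ℕ) : List ℕ :=
  ((List.range T.rows.length).reverse).filterMap fun i => (T.rows.getD i [])[j]?

/-- The column reading of a tableau: columns read top to bottom, left to right. -/
def colReading {n : ℕ} (T : Tableau n) : List ℕ :=
  ((List.range ((T.rows.getD 0 []).length)).map (colOf T)).flatten

/-- The `(k,m)`-completion of `S ⊆ {1,…,m}`: adjoin to `S` the `k - |S|` largest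
elements of `{1,…,m} \ S`. -/
def completion (k m : ℕ) (S : Finset ℕ) : Finset ℕ :=
  S ∪ ((((Finset.Icc 1 m) \ S).sort (· ≤ ·)).reverse.take (k - S.card)).toFinset

/-- Tropical (max-plus) product of `n × n` matrices over `ℝ ∪ {-∞}`. -/
noncomputable def tmulF (n : ℕ) (A B : Fin n → Fin n → WithBot ℝ) :
    Fin n → Fin n → WithBot ℝ :=
  fun i j => Finset.univ.sup fun k => A i k + B k j

/-- The tropical identity matrix. -/
noncomputable def tIdF (n : ℕ) : Fin n → Fin n → WithBot ℝ :=
  fun i j => if i = j then (0 : WithBot ℝ) else ⊥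

section Stmt4Aux

/-- Count of elements of `A` that are `≤ x`. -/
def cnt (A : Finset ℕ) (x : ℕ) : ℕ := (A.filter (· ≤ x)).card

lemma length_filter_sort (A : Finset ℕ) (x : ℕ) :
    ((A.sort (· ≤ ·)).filter (· ≤ x)).length = cnt A x := by
  have hnd : ((A.sort (· ≤ ·)).filter (· ≤ x)).Nodup := (A.sort_nodup _).filter _
  have : ((A.sort (· ≤ ·)).filter (· ≤ x)).toFinset = A.filter (· ≤ x) := by
    ext y
    simp [List.mem_filter, Finset.mem_sort, Finset.mem_filter]
  rw [cnt, ← this, List.toFinset_card_of_nodup hnd]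

lemma sorted_getD_le_iff (l : List ℕ) (hl : l.Pairwise (· ≤ ·)) (i x : ℕ) (hi : i < l.length) :
    l.getD i 0 ≤ x ↔ i < (l.filter (· ≤ x)).length := by
  rw [List.getD_eq_getElem l 0 hi]
  constructor
  · intro h
    have ht : (l.take (i+1)).filter (fun y => decide (y ≤ x)) = l.take (i+1) := by
      rw [List.filter_eq_self]
      intro y hy
      obtain ⟨j, hj, rfl⟩ := List.mem_iff_getElem.mp hy
      rw [List.getElem_take]
      have hj1 : j < i + 1 := by rw [List.length_take] at hj; omega
      have hj' : j < l.length := by rw [List.length_take] at hj; omega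
      have : l[j] ≤ l[i] := by
        rcases Nat.lt_or_ge j i with hlt | hge
        · exact (List.pairwise_iff_getElem.mp hl) j i hj' hi hlt
        · have : j = i := by omega
          subst this; exact le_rfl
      simpa using le_trans this h
    have hsub := (List.take_sublist (i+1) l).filter (fun y => decide (y ≤ x))
    rw [ht] at hsub
    have := hsub.length_le
    rw [List.length_take] at this
    omega
  · intro h
    by_contra hc
    push_neg at hc
    have hdrop : (l.drop i).filter (fun y => decide (y ≤ x)) = [] := by
      rw [List.filter_eq_nil_iff]
      intro y hy
      obtain ⟨b, hb, rfl⟩ := List.mem_iff_getElem.mp hy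
      rw [List.getElem_drop]
      have hb' : b < l.length - i := by rw [List.length_drop] at hb; omega
      have hib : i + b < l.length := by omega
      have : l[i] ≤ l[i+b] := by
        rcases Nat.eq_zero_or_pos b with rfl | hbpos
        · simp
        · exact (List.pairwise_iff_getElem.mp hl) i (i+b) hi hib (by omega)
      simp only [decide_eq_true_eq]
      omega
    have hsplit : l.filter (fun y => decide (y ≤ x)) =
        (l.take i).filter (fun y => decide (y ≤ x)) ++ (l.drop i).filter (fun y => decide (y ≤ x)) := by
      rw [← List.filter_append, List.take_append_drop]
    rw [hsplit, hdrop, List.append_nil] at h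
    have := (List.filter_sublist (p := fun y => decide (y ≤ x)) (l := l.take i)).length_le
    rw [List.length_take] at this
    omega

lemma nthEl_le_iff (A : Finset ℕ) (i x : ℕ) (hi : i < A.card) :
    nthEl A i ≤ x ↔ i < cnt A x := by
  rw [← length_filter_sort]
  exact sorted_getD_le_iff _ (A.pairwise_sort _) i x (by rwa [Finset.length_sort])

lemma nthEl_mem (A : Finset ℕ) (i : ℕ) (hi : i < A.card) : nthEl A i ∈ A := by
  have hi' : i < (A.sort (· ≤ ·)).length := by rwa [Finset.length_sort]
  rw [nthEl, List.getD_eq_getElem _ 0 hi']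
  exact (Finset.mem_sort _).mp (List.getElem_mem _)

lemma E_nodup (k m : ℕ) (S : Finset ℕ) :
    ((((Finset.Icc 1 m) \ S).sort (· ≤ ·)).reverse.take (k - S.card)).Nodup :=
  ((List.take_sublist _ _).nodup (List.nodup_reverse.mpr (Finset.sort_nodup _ _)))

lemma E_mem_sub (k m : ℕ) (S : Finset ℕ) {y : ℕ}
    (hy : y ∈ ((((Finset.Icc 1 m) \ S).sort (· ≤ ·)).reverse.take (k - S.card))) :
    y ∈ (Finset.Icc 1 m) \ S := by
  have := (List.take_sublist _ _).mem hy
  rw [List.mem_reverse, Finset.mem_sort] at this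
  exact this

lemma completion_card (k m : ℕ) (S : Finset ℕ) (hS : S ⊆ Finset.Icc 1 m)
    (hSk : S.card ≤ k) (hkm : k ≤ m) :
    (completion k m S).card = k := by
  set L := (((Finset.Icc 1 m) \ S).sort (· ≤ ·)).reverse with hL
  have hLlen : L.length = m - S.card := by
    rw [hL, List.length_reverse, Finset.length_sort, Finset.card_sdiff_of_subset hS, Nat.card_Icc]; omega
  have hlen : (L.take (k - S.card)).length = k - S.card := by
    rw [List.length_take, hLlen]; omega
  have hdisj : Disjoint S (L.take (k - S.card)).toFinset := by
    rw [Finset.disjoint_right]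
    intro y hy
    have := E_mem_sub k m S (by simpa using hy)
    exact (Finset.mem_sdiff.mp this).2
  rw [completion, Finset.card_union_of_disjoint hdisj,
    List.toFinset_card_of_nodup (E_nodup k m S), hlen]
  omega

lemma completion_subset (k m : ℕ) (S : Finset ℕ) (hS : S ⊆ Finset.Icc 1 m) :
    completion k m S ⊆ Finset.Icc 1 m := by
  intro y hy
  rcases Finset.mem_union.mp hy with h | h
  · exact hS h
  · exact (Finset.mem_sdiff.mp (E_mem_sub k m S (by simpa using h))).1

lemma E_upset (k m : ℕ) (S : Finset ℕ) {e y : ℕ}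
    (he : e ∈ ((((Finset.Icc 1 m) \ S).sort (· ≤ ·)).reverse.take (k - S.card)))
    (hy : y ∈ (Finset.Icc 1 m) \ S) (hey : e < y) :
    y ∈ ((((Finset.Icc 1 m) \ S).sort (· ≤ ·)).reverse.take (k - S.card)) := by
  set L := (((Finset.Icc 1 m) \ S).sort (· ≤ ·)).reverse with hL
  set j := k - S.card
  have hLsorted : L.Pairwise (fun a b => b ≤ a) := by
    rw [hL, List.pairwise_reverse]
    exact Finset.pairwise_sort _ _
  have hyL : y ∈ L := by rw [hL, List.mem_reverse, Finset.mem_sort]; exact hy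
  by_contra hyn
  have hyd : y ∈ L.drop j := by
    rcases (List.mem_append.mp (by rw [List.take_append_drop]; exact hyL :
      y ∈ L.take j ++ L.drop j)) with h | h
    · exact absurd h hyn
    · exact h
  obtain ⟨a, ha, hea⟩ := List.mem_iff_getElem.mp he
  obtain ⟨b, hb, hyb⟩ := List.mem_iff_getElem.mp hyd
  rw [List.getElem_take] at hea
  rw [List.getElem_drop] at hyb
  have haj : a < j := by rw [List.length_take] at ha; omega
  have ha' : a < L.length := by rw [List.length_take] at ha; omega
  have hb' : j + b < L.length := by rw [List.length_drop] at hb; omega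
  have : L[j + b] ≤ L[a] :=
    (List.pairwise_iff_getElem.mp hLsorted) a (j + b) ha' hb' (by omega)
  rw [hea, hyb] at this
  omega

lemma cnt_lower (A : Finset ℕ) (m x : ℕ) (hA : A ⊆ Finset.Icc 1 m) :
    A.card ≤ cnt A x + (m - x) := by
  have hsplit := Finset.card_filter_add_card_filter_not (s := A) (p := (· ≤ x))
  have hsub : A.filter (fun y => ¬ y ≤ x) ⊆ Finset.Ioc x m := by
    intro y hy
    rw [Finset.mem_filter] at hy
    have := hA hy.1
    rw [Finset.mem_Icc] at this
    rw [Finset.mem_Ioc]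
    omega
  have := Finset.card_le_card hsub
  rw [Nat.card_Ioc] at this
  rw [cnt]
  omega

lemma cnt_completion_upper (k m : ℕ) (T : Finset ℕ) (hT : T ⊆ Finset.Icc 1 m)
    (hTk : T.card ≤ k) (hkm : k ≤ m) (x : ℕ) :
    cnt (completion k m T) x ≤ cnt T x ∨ cnt (completion k m T) x + (m - x) ≤ k := by
  set Efin := ((((Finset.Icc 1 m) \ T).sort (· ≤ ·)).reverse.take (k - T.card)).toFinset with hE
  rcases Finset.eq_empty_or_nonempty (Efin.filter (· ≤ x)) with hemp | ⟨e, he⟩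
  · left
    have : (completion k m T).filter (· ≤ x) ⊆ T.filter (· ≤ x) := by
      intro y hy
      rw [Finset.mem_filter] at hy ⊢
      rcases Finset.mem_union.mp hy.1 with h | h
      · exact ⟨h, hy.2⟩
      · exfalso
        have : y ∈ Efin.filter (· ≤ x) := Finset.mem_filter.mpr ⟨h, hy.2⟩
        rw [hemp] at this
        exact absurd this (Finset.notMem_empty y)
    exact Finset.card_le_card this
  · right
    rw [Finset.mem_filter] at he
    have hIoc : Finset.Ioc x m ⊆ (completion k m T).filter (fun y => ¬ y ≤ x) := by
      intro y hy
      rw [Finset.mem_Ioc] at hy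
      rw [Finset.mem_filter]
      refine ⟨?_, by omega⟩
      by_cases hyT : y ∈ T
      · exact Finset.mem_union_left _ hyT
      · have hyC : y ∈ (Finset.Icc 1 m) \ T := by
          rw [Finset.mem_sdiff, Finset.mem_Icc]
          have he1 : 1 ≤ e := by
            have := (Finset.mem_sdiff.mp (E_mem_sub k m T (by simpa [hE] using he.1))).1
            rw [Finset.mem_Icc] at this
            omega
          exact ⟨⟨by omega, hy.2⟩, hyT⟩
        have heE := (List.mem_toFinset).mp (by simpa [hE] using he.1)
        have hele : e < y := by
          have hex : e ≤ x := he.2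
          omega
        exact Finset.mem_union_right _ (List.mem_toFinset.mpr (E_upset k m T heE hyC hele))
    have h1 := Finset.card_le_card hIoc
    rw [Nat.card_Ioc] at h1
    have h2 := Finset.card_filter_add_card_filter_not (s := completion k m T) (p := (· ≤ x))
    have h3 := completion_card k m T hT hTk hkm
    rw [cnt]
    omega

lemma cnt_mono_of_GLE (S T : Finset ℕ) (h : GLE S T) (x : ℕ) : cnt T x ≤ cnt S x := by
  rcases Nat.eq_zero_or_pos (cnt T x) with h0 | hpos
  · omega
  · set j := cnt T x - 1 with hj
    have hjT : j < T.card := by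
      have : cnt T x ≤ T.card := Finset.card_le_card (Finset.filter_subset _ _)
      omega
    have hjS : j < S.card := lt_of_lt_of_le hjT h.1
    have h1 : nthEl T j ≤ x := (nthEl_le_iff T j x hjT).mpr (by omega)
    have h2 : nthEl S j ≤ nthEl T j := h.2 j hjT
    have := (nthEl_le_iff S j x hjS).mp (le_trans h2 h1)
    omega

end Stmt4Aux

/-- if `k ≤ m ≤ n`, `S, T ⊆ {1,…,m}` have cardinality at most `k` and
`S ≤ T` in the general order, then the `(k,m)`-completions satisfy `Ŝ ≤ T̂`, i.e.
`Ŝⁱ ≤ T̂ⁱ` for all `i ∈ {1,…,k}`. -/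
theorem stmt4 (n k m : ℕ) (hkm : k ≤ m) (hmn : m ≤ n) (S T : Finset ℕ)
    (hS : S ⊆ Finset.Icc 1 m) (hT : T ⊆ Finset.Icc 1 m)
    (hSk : S.card ≤ k) (hTk : T.card ≤ k) (h : GLE S T) :
    (completion k m S).card = k ∧ (completion k m T).card = k ∧
      ∀ i < k, nthEl (completion k m S) i ≤ nthEl (completion k m T) i := by
  have hcS := completion_card k m S hS hSk hkm
  have hcT := completion_card k m T hT hTk hkm
  refine ⟨hcS, hcT, ?_⟩
  have hcnt : ∀ x, cnt (completion k m T) x ≤ cnt (completion k m S) x := by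
    intro x
    rcases cnt_completion_upper k m T hT hTk hkm x with h1 | h1
    · have h2 : cnt T x ≤ cnt S x := cnt_mono_of_GLE S T h x
      have h3 : cnt S x ≤ cnt (completion k m S) x :=
        Finset.card_le_card (Finset.filter_subset_filter _ Finset.subset_union_left)
      omega
    · have h4 := cnt_lower (completion k m S) m x (completion_subset k m S hS)
      rw [hcS] at h4
      omega
  intro i hi
  rw [nthEl_le_iff (completion k m S) i _ (by omega)]
  exact lt_of_lt_of_le
    ((nthEl_le_iff (completion k m T) i _ (by omega)).mp le_rfl) (hcnt _)
end

section
/- The map ρ_n, defined on generators x ∈ {1,...,n} by ρ_n(x)_{P,Q} = −∞ if |P| ≠ |Q| or P ≰ Q, ρ_n(x)_{P,Q} = 1 if |P| = |Q|, P ≤ Q and x belongs to the union of the order interval [P,Q], and 0 otherwise, and extended multiplicatively to words, satisfies: for every word w over {1,...,n} and every pair P, Q of subsets with |P| = |Q| and P ≤ Q, the entry ρ_n(w)_{P,Q} equals the maximum length of a scattered subword of w that can be read from P to Q. -/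
section Helpers

theorem FLE_refl (S : Finset ℕ) : FLE S S := ⟨rfl, fun _ _ => le_rfl⟩

theorem FLE_trans {S T U : Finset ℕ} (h1 : FLE S T) (h2 : FLE T U) : FLE S U := by
  refine ⟨h1.1.trans h2.1, fun i hi => ?_⟩
  exact (h1.2 i (h2.1 ▸ hi)).trans (h2.2 i hi)

instance : IsTrans (Finset ℕ) FLE := ⟨fun _ _ _ => FLE_trans⟩

theorem readable_nil {n : ℕ} {P Q : Finset ℕ} (h : FLE P Q) : Readable n [] P Q :=
  ⟨[], rfl, by simp, List.isChain_pair.mpr h, by simp⟩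

theorem readable_FLE {n : ℕ} {u : List ℕ} {P Q : Finset ℕ} (h : Readable n u P Q) :
    FLE P Q := by
  obtain ⟨L, _, _, hchain, _⟩ := h
  have hp := List.isChain_iff_pairwise.mp hchain
  exact List.rel_of_pairwise_cons hp (List.mem_append_right _ (List.mem_singleton_self Q))

theorem readable_mono_left {n : ℕ} {u : List ℕ} {P P' Q : Finset ℕ}
    (h : FLE P P') (hr : Readable n u P' Q) : Readable n u P Q := by
  obtain ⟨L, hlen, hmem, hchain, hget⟩ := hr
  simp only [List.Chain', List.isChain_cons] at hchain
  exact ⟨L, hlen, hmem, List.isChain_cons.mpr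
    ⟨fun y hy => FLE_trans h (hchain.1 y hy), hchain.2⟩, hget⟩

theorem readable_cons {n x : ℕ} {u : List ℕ} {P S Q : Finset ℕ}
    (hS : S ⊆ Finset.Icc 1 n) (hPS : FLE P S) (hx : x ∈ S)
    (hr : Readable n u S Q) : Readable n (x :: u) P Q := by
  obtain ⟨L, hlen, hmem, hchain, hget⟩ := hr
  refine ⟨S :: L, by simpa using hlen, ?_, ?_, ?_⟩
  · intro A hA
    rcases List.mem_cons.mp hA with h | h
    · exact h ▸ hS
    · exact hmem A h
  · exact List.isChain_cons_cons.mpr ⟨hPS, hchain⟩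
  · intro i hi
    cases i with
    | zero => simpa using hx
    | succ i => simpa using hget i (by simpa using Nat.lt_of_succ_lt_succ hi)

theorem readable_cons_dest {n x : ℕ} {u : List ℕ} {P Q : Finset ℕ}
    (hr : Readable n (x :: u) P Q) :
    ∃ S, S ⊆ Finset.Icc 1 n ∧ FLE P S ∧ x ∈ S ∧ Readable n u S Q := by
  obtain ⟨L, hlen, hmem, hchain, hget⟩ := hr
  cases L with
  | nil => simp at hlen
  | cons S L' =>
    simp only [List.Chain', List.cons_append, List.isChain_cons_cons] at hchain
    refine ⟨S, hmem S List.mem_cons_self, hchain.1, by simpa using hget 0 (by simp), ?_⟩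
    refine ⟨L', by simpa using hlen, fun A hA => hmem A (List.mem_cons_of_mem _ hA),
      hchain.2, ?_⟩
    intro i hi
    simpa using hget (i + 1) (by simpa using Nat.succ_lt_succ hi)

theorem rhoW_bot {n : ℕ} (w : List ℕ) {P Q : Finset ℕ} (h : ¬ FLE P Q) :
    rhoW n w P Q = ⊥ := by
  induction w generalizing P with
  | nil => simp [rhoW, h]
  | cons x w' ih =>
    simp only [rhoW, tmul]
    refine eq_bot_iff.mpr (Finset.sup_le fun R _ => ?_)
    by_cases hPR : FLE P R
    · have hRQ : ¬ FLE R Q := fun hRQ => h (FLE_trans hPR hRQ)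
      rw [ih hRQ, WithBot.add_bot]
    · rw [rhoGen, if_neg hPR, WithBot.bot_add]

theorem rhoGen_nonneg {n x : ℕ} {P R : Finset ℕ} (h : FLE P R) :
    (0 : WithBot ℝ) ≤ rhoGen n x P R := by
  rw [rhoGen, if_pos h]
  split_ifs <;> norm_num

open Classical in
/-- Maximum length of a readable scattered subword. -/
noncomputable def maxLen (n : ℕ) (w : List ℕ) (P Q : Finset ℕ) : ℕ :=
  Nat.findGreatest (fun k => ∃ u : List ℕ, u.Sublist w ∧ u.length = k ∧ Readable n u P Q)
    w.length

open Classical in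
theorem maxLen_nil {n : ℕ} {P Q : Finset ℕ} : maxLen n [] P Q = 0 :=
  Nat.le_zero.mp (Nat.findGreatest_le _)

open Classical in
theorem maxLen_spec {n : ℕ} {w : List ℕ} {P Q : Finset ℕ} (hPQ : FLE P Q) :
    ∃ u : List ℕ, u.Sublist w ∧ u.length = maxLen n w P Q ∧ Readable n u P Q :=
  Nat.findGreatest_spec
    (P := fun k => ∃ u : List ℕ, u.Sublist w ∧ u.length = k ∧ Readable n u P Q)
    (Nat.zero_le _) ⟨[], List.nil_sublist w, rfl, readable_nil hPQ⟩

open Classical in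
theorem maxLen_le {n : ℕ} {w u : List ℕ} {P Q : Finset ℕ}
    (hu : u.Sublist w) (hr : Readable n u P Q) : u.length ≤ maxLen n w P Q :=
  Nat.le_findGreatest hu.length_le ⟨u, hu, rfl, hr⟩

theorem rhoW_eq_maxLen {n : ℕ} (w : List ℕ) :
    ∀ P Q : Finset ℕ, P ⊆ Finset.Icc 1 n → FLE P Q →
      rhoW n w P Q = (maxLen n w P Q : WithBot ℝ) := by
  induction w with
  | nil =>
    intro P Q _ hPQ
    rw [maxLen_nil, Nat.cast_zero]
    simp only [rhoW]
    rw [if_pos hPQ]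
  | cons x w' ih =>
    intro P Q hP hPQ
    simp only [rhoW, tmul]
    refine le_antisymm ?_ ?_
    · refine Finset.sup_le fun R hR => ?_
      have hRsub : R ⊆ Finset.Icc 1 n := Finset.mem_powerset.mp hR
      by_cases hPR : FLE P R
      · by_cases hRQ : FLE R Q
        · rw [ih R Q hRsub hRQ]
          obtain ⟨u', hsub', hlen', hr'⟩ := maxLen_spec (n := n) (w := w') hRQ
          rw [rhoGen, if_pos hPR]
          by_cases hex : ∃ S : Finset ℕ, S ⊆ Finset.Icc 1 n ∧ FLE P S ∧ FLE S R ∧ x ∈ S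
          · rw [if_pos hex]
            obtain ⟨S, hSsub, hPS, hSR, hxS⟩ := hex
            have hread : Readable n (x :: u') P Q :=
              readable_cons hSsub hPS hxS (readable_mono_left hSR hr')
            have hle : u'.length + 1 ≤ maxLen n (x :: w') P Q :=
              maxLen_le (hsub'.cons₂ x) hread
            rw [hlen'] at hle
            calc (1 : WithBot ℝ) + (maxLen n w' R Q : ℕ)
                = ((maxLen n w' R Q + 1 : ℕ) : WithBot ℝ) := by push_cast; rw [add_comm]
              _ ≤ _ := by exact_mod_cast hle
          · rw [if_neg hex, zero_add]
            have hread : Readable n u' P Q := readable_mono_left hPR hr'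
            have hle := maxLen_le (hsub'.cons x) hread
            rw [hlen'] at hle
            exact_mod_cast hle
        · rw [rhoW_bot w' hRQ, WithBot.add_bot]; exact bot_le
      · rw [rhoGen, if_neg hPR, WithBot.bot_add]; exact bot_le
    · obtain ⟨u, hsub, hlen, hr⟩ := maxLen_spec (n := n) (w := x :: w') hPQ
      have hcases : u.Sublist w' ∨ ∃ r, u = x :: r ∧ r.Sublist w' := by
        cases hsub with
        | cons _ h => exact Or.inl h
        | cons_cons _ h => exact Or.inr ⟨_, rfl, h⟩
      rcases hcases with hsub' | ⟨u', rfl, hsub'⟩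
      · have h1 : (maxLen n (x :: w') P Q : WithBot ℝ) ≤
            rhoGen n x P P + rhoW n w' P Q := by
          rw [ih P Q hP hPQ]
          calc (maxLen n (x :: w') P Q : WithBot ℝ)
              = 0 + (maxLen n (x :: w') P Q : ℕ) := by rw [zero_add]
            _ ≤ rhoGen n x P P + (maxLen n w' P Q : ℕ) := by
                refine add_le_add (rhoGen_nonneg (FLE_refl P)) ?_
                have := maxLen_le hsub' hr
                rw [hlen] at this
                exact_mod_cast this
        exact h1.trans (Finset.le_sup (f := fun R => rhoGen n x P R + rhoW n w' R Q)
          (Finset.mem_powerset.mpr hP))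
      · obtain ⟨S, hSsub, hPS, hxS, hr'⟩ := readable_cons_dest hr
        have hSQ : FLE S Q := readable_FLE hr'
        have hgen : rhoGen n x P S = 1 := by
          rw [rhoGen, if_pos hPS, if_pos ⟨S, hSsub, hPS, FLE_refl S, hxS⟩]
        have h1 : (maxLen n (x :: w') P Q : WithBot ℝ) ≤
            rhoGen n x P S + rhoW n w' S Q := by
          rw [ih S Q hSsub hSQ, hgen]
          have hle : u'.length ≤ maxLen n w' S Q := maxLen_le hsub' hr'
          have hm : maxLen n (x :: w') P Q = u'.length + 1 := by
            simpa using hlen.symm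
          rw [hm]
          calc ((u'.length + 1 : ℕ) : WithBot ℝ)
              = 1 + (u'.length : ℕ) := by push_cast; rw [add_comm]
            _ ≤ 1 + (maxLen n w' S Q : ℕ) := by
                exact add_le_add le_rfl (by exact_mod_cast hle)
        exact h1.trans (Finset.le_sup (f := fun R => rhoGen n x P R + rhoW n w' R Q)
          (Finset.mem_powerset.mpr hSsub))

end Helpers

/-- for every word `w` over `{1,…,n}` and all subsets `P, Q` with
`|P| = |Q|` and `P ≤ Q`, the entry `ρₙ(w)_{P,Q}` equals the maximum length of a
scattered subword of `w` that can be read from `P` to `Q`. -/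
theorem stmt6 (n : ℕ) (w : List ℕ) (hw : ∀ x ∈ w, x ∈ Finset.Icc 1 n)
    (P Q : Finset ℕ) (hP : P ⊆ Finset.Icc 1 n) (hQ : Q ⊆ Finset.Icc 1 n)
    (hPQ : FLE P Q) :
    ∃ m : ℕ,
      (∃ u : List ℕ, u.Sublist w ∧ u.length = m ∧ Readable n u P Q) ∧
      (∀ u : List ℕ, u.Sublist w → Readable n u P Q → u.length ≤ m) ∧
      rhoW n w P Q = (m : WithBot ℝ) := by
  exact ⟨maxLen n w P Q, maxLen_spec hPQ,
    fun u hu hr => by simpa using maxLen_le hu hr,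
    rhoW_eq_maxLen w P Q hP hPQ⟩
end
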